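/- Let C be a maximum class of VC dimension d over X, D ⊆ C a maximum class of VC dimension d-1 over X, and let Q be an incomplete cube for (C, D) with source s and support σ. Let x, y ∈ X with x ∉ σ and y ∈ σ. Then: (i) Q_x := Q|(X \ {x}) is an incomplete cube for (C_x, D_x) whose source is s \ {x}; (ii) Q^y := {c ⊆ X \ {y} : c ∈ Q and c ∪ {y} ∈ Q} is an incomplete cube for (C^y, D^y) whose source is s \ {y}. -/

import Mathlib

variable {X : Type} [Fintype X] [DecidableEq X]

/-- Hamming distance between two subsets of `X` (size of symmetric difference). -/
def hdist (c c' : Finset X) : ℕ := ((c \ c') ∪ (c' \ c)).card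

/-- The restriction `C|Y = {c ∩ Y : c ∈ C}`. -/
def restrictTo (C : Finset (Finset X)) (Y : Finset X) : Finset (Finset X) :=
  C.image (· ∩ Y)

/-- `Y` is shattered by `C`, i.e. `C|Y = 2^Y`. -/
def Shatters (C : Finset (Finset X)) (Y : Finset X) : Prop :=
  ∀ s ∈ Y.powerset, ∃ c ∈ C, c ∩ Y = s

instance (C : Finset (Finset X)) : DecidablePred (Shatters C) := fun _ => by
  unfold Shatters; infer_instance

/-- The family `X̄(C)` of all sets shattered by `C`. -/
def shatteredSets (C : Finset (Finset X)) : Finset (Finset X) :=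
  Finset.univ.filter (Shatters C)

/-- The VC dimension of `C`: maximum size of a shattered set. -/
def vcDim (C : Finset (Finset X)) : ℕ := (shatteredSets C).sup Finset.card

/-- `C` is ample: `|C| = |X̄(C)|`. -/
def IsAmple (C : Finset (Finset X)) : Prop := C.card = (shatteredSets C).card

/-- `C` is a maximum class of VC dimension `d`. -/
def IsMaximumClass (C : Finset (Finset X)) (d : ℕ) : Prop :=
  vcDim C = d ∧ C.card = ∑ i ∈ Finset.range (d + 1), (Fintype.card X).choose i

/-- `B` is a cube with support `Y`: `B = {t ∪ s : s ⊆ Y}` for some `t ⊆ X \ Y`. -/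
def IsCubeS (B : Finset (Finset X)) (Y : Finset X) : Prop :=
  ∃ t : Finset X, t ∩ Y = ∅ ∧ B = Y.powerset.image (fun s => t ∪ s)

/-- `B` is a cube. -/
def IsCube (B : Finset (Finset X)) : Prop := ∃ Y, IsCubeS B Y

/-- `B` is a cube of `C`: a cube contained in `C`. -/
def IsCubeOf (C B : Finset (Finset X)) : Prop := B ⊆ C ∧ IsCube B

/-- `B` is a maximal cube of `C` (maximal under inclusion among cubes of `C`). -/
def IsMaximalCubeOf (C B : Finset (Finset X)) : Prop :=
  IsCubeOf C B ∧ ∀ B', IsCubeOf C B' → B ⊆ B' → B = B'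

/-- `c` is a corner of `C`: a concept of `C` belonging to a unique maximal cube of `C`. -/
def IsCornerOf (C : Finset (Finset X)) (c : Finset X) : Prop :=
  c ∈ C ∧ ∃! B, IsMaximalCubeOf C B ∧ c ∈ B

/-- The one-inclusion graph `G(C)`. -/
def oneInclusionGraph (C : Finset (Finset X)) : SimpleGraph {c : Finset X // c ∈ C} where
  Adj c c' := hdist c.1 c'.1 = 1
  symm := by
    constructor
    intro a b h
    simpa [hdist, Finset.union_comm] using h
  loopless := by
    constructor
    intro a h
    simp [hdist] at h

/-- `C` is isometric: `G(C)` is connected and graph distances equal Hamming distances. -/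
def IsIsometric (C : Finset (Finset X)) : Prop :=
  (oneInclusionGraph C).Connected ∧
  ∀ c c' : {c : Finset X // c ∈ C}, (oneInclusionGraph C).dist c c' = hdist c.1 c'.1

/-- `C` is weakly isometric: `G(C)` is connected and graph distances equal Hamming
distances for pairs at Hamming distance at most 2. -/
def IsWeaklyIsometric (C : Finset (Finset X)) : Prop :=
  (oneInclusionGraph C).Connected ∧
  ∀ c c' : {c : Finset X // c ∈ C}, hdist c.1 c'.1 ≤ 2 →
    (oneInclusionGraph C).dist c c' = hdist c.1 c'.1

/-- A list of concepts is a corner peeling if it has no duplicates and each element is a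
corner of the corresponding level set. -/
def IsCornerPeeling (l : List (Finset X)) : Prop :=
  l.Nodup ∧ ∀ i (h : i < l.length), IsCornerOf ((l.take (i + 1)).toFinset) (l.get ⟨i, h⟩)

/-- `C` is dismantlable: it admits a corner peeling ordering of all its concepts. -/
def Dismantlable (C : Finset (Finset X)) : Prop :=
  ∃ l : List (Finset X), l.toFinset = C ∧ IsCornerPeeling l

/-- Non-clashing condition for a map `r`. -/
def NonClashing (C : Finset (Finset X)) (r : Finset X → Finset X) : Prop :=
  ∀ c ∈ C, ∀ c' ∈ C, c ≠ c' → c ∩ (r c ∪ r c') ≠ c' ∩ (r c ∪ r c')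

/-- `r` is a representation map for `C`: a non-clashing bijection from `C` onto `X̄(C)`. -/
def IsRepMap (C : Finset (Finset X)) (r : Finset X → Finset X) : Prop :=
  (∀ c ∈ C, r c ∈ shatteredSets C) ∧
  Set.InjOn r ↑C ∧
  (∀ Y ∈ shatteredSets C, ∃ c ∈ C, r c = Y) ∧
  NonClashing C r

/-- `C` admits an unlabeled sample compression scheme of size `k`. -/
def HasUSCS (C : Finset (Finset X)) (k : ℕ) : Prop :=
  ∃ (α : Finset X → Finset X → Finset X) (β : Finset X → Finset X),
    ∀ (Y : Finset X), ∀ c ∈ C,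
      α Y (c ∩ Y) ⊆ Y ∧ (α Y (c ∩ Y)).card ≤ k ∧
      β (α Y (c ∩ Y)) ∈ C ∧ β (α Y (c ∩ Y)) ∩ Y = c ∩ Y

/-- The cube of `2^X` with support `Y` containing `c`. -/
def cubeAt (c Y : Finset X) : Finset (Finset X) :=
  Y.powerset.image (fun s => (c \ Y) ∪ s)

/-- Condition (C1): for every `c ∈ C`, the cube with support `r c` containing `c`
is a cube of `C`. -/
def CondC1 (C : Finset (Finset X)) (r : Finset X → Finset X) : Prop :=
  ∀ c ∈ C, cubeAt c (r c) ⊆ C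

/-- Condition (C2): every cube of `C` has a unique concept `c` with `r c ∩ supp B = ∅`. -/
def CondC2 (C : Finset (Finset X)) (r : Finset X → Finset X) : Prop :=
  ∀ B Y, B ⊆ C → IsCubeS B Y → ∃! c, c ∈ B ∧ r c ∩ Y = ∅

/-- The facet of the cross-polytope corresponding to a subset `c ⊆ X`:
`+x ∈ σ_c` iff `x ∈ c` (where `+x = Sum.inl x` and `-x = Sum.inr x`). -/
def facet (c : Finset X) : Finset (X ⊕ X) :=
  c.image Sum.inl ∪ (Finset.univ \ c).image Sum.inr

/-- A list of facets of the cross-polytope is a partial shelling. -/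
def IsPartialShelling (L : List (Finset (X ⊕ X))) : Prop :=
  L.Nodup ∧ ∀ i j, i < j → j < L.length →
    ∃ k < j, ((L.getD k ∅) ∩ (L.getD j ∅)).card = Fintype.card X - 1 ∧
      (L.getD i ∅) ∩ (L.getD j ∅) ⊆ (L.getD k ∅) ∩ (L.getD j ∅)

/-- `Q` is an incomplete cube for `(C, D)` with support `σ`: a cube of `C` whose
support `σ` is a missed simplex (shattered by `C` but not by `D`). -/
def IsIncompleteCube (C D Q : Finset (Finset X)) (σ : Finset X) : Prop :=
  Q ⊆ C ∧ IsCubeS Q σ ∧ Shatters C σ ∧ ¬ Shatters D σ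

/-- `c` is the source of the incomplete cube `Q` with support `σ`:
`c ∈ Q` and `c ∩ σ ∉ D|σ`. -/
def IsSource (D Q : Finset (Finset X)) (σ : Finset X) (c : Finset X) : Prop :=
  c ∈ Q ∧ c ∩ σ ∉ restrictTo D σ

/-- The restriction `C_x = C|(X \ {x})`, with concepts viewed as subsets of `X`
avoiding `x`. -/
def restrictX (C : Finset (Finset X)) (x : X) : Finset (Finset X) :=
  C.image (·.erase x)

/-- The reduction `C^x = {c ⊆ X \ {x} : c ∈ C and c ∪ {x} ∈ C}`. -/
def reduction (C : Finset (Finset X)) (x : X) : Finset (Finset X) :=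
  C.filter (fun c => x ∉ c ∧ insert x c ∈ C)

/-- The interval `B(c,c') = {t : d(c,t) + d(t,c') = d(c,c')}`. -/
def interval (c c' : Finset X) : Finset (Finset X) :=
  Finset.univ.filter (fun t => hdist c t + hdist t c' = hdist c c')

/-- `C'` is convex in `C`. -/
def IsConvexIn (C C' : Finset (Finset X)) : Prop :=
  ∀ c ∈ C', ∀ c'' ∈ C', interval c c'' ∩ C ⊆ C'

/-- `C'` is locally convex in `C`. -/
def IsLocallyConvexIn (C C' : Finset (Finset X)) : Prop :=
  ∀ c ∈ C', ∀ c'' ∈ C', hdist c c'' = 2 → interval c c'' ∩ C ⊆ C'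

/-- `C` is a conditional antimatroid: contains `∅`, closed under intersection, and
every concept is generated by its extremal points. -/
def IsCondAntimatroid (C : Finset (Finset X)) : Prop :=
  ∅ ∈ C ∧ (∀ c ∈ C, ∀ c' ∈ C, c ∩ c' ∈ C) ∧
  ∀ c ∈ C, ∀ c' ∈ C, (c.filter (fun x => c.erase x ∈ C)) ⊆ c' → c ⊆ c'

lemma erase_inter_of_not_mem' {c σ : Finset X} {x : X} (hx : x ∉ σ) :
    c.erase x ∩ σ = c ∩ σ := by
  ext a
  simp only [Finset.mem_inter, Finset.mem_erase]
  constructor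
  · rintro ⟨⟨-, h⟩, h'⟩; exact ⟨h, h'⟩
  · rintro ⟨h, h'⟩; exact ⟨⟨fun e => hx (e ▸ h'), h⟩, h'⟩

lemma inter_erase_of_not_mem' {c σ : Finset X} {y : X} (hy : y ∉ c) :
    c ∩ σ.erase y = c ∩ σ := by
  ext a
  simp only [Finset.mem_inter, Finset.mem_erase]
  constructor
  · rintro ⟨h, -, h'⟩; exact ⟨h, h'⟩
  · rintro ⟨h, h'⟩; exact ⟨h, fun e => hy (e ▸ h), h'⟩

lemma erase_inter_erase' (s σ : Finset X) (y : X) :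
    s.erase y ∩ σ.erase y = (s ∩ σ).erase y := by
  ext a
  simp only [Finset.mem_inter, Finset.mem_erase]
  tauto

lemma isCubeS_shatters {B : Finset (Finset X)} {Y : Finset X} (h : IsCubeS B Y) :
    Shatters B Y := by
  obtain ⟨t, ht, rfl⟩ := h
  intro u hu
  rw [Finset.mem_powerset] at hu
  refine ⟨t ∪ u, Finset.mem_image_of_mem _ (Finset.mem_powerset.2 hu), ?_⟩
  rw [Finset.union_inter_distrib_right, ht, Finset.empty_union, Finset.inter_eq_left.2 hu]

lemma shatters_mono {C C' : Finset (Finset X)} {Y : Finset X} (h : C ⊆ C')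
    (hs : Shatters C Y) : Shatters C' Y := by
  intro u hu
  obtain ⟨c, hc, hceq⟩ := hs u hu
  exact ⟨c, h hc, hceq⟩

lemma restrictX_cubeS {σ t : Finset X} {x : X}
    (hx : x ∉ σ) :
    restrictX (σ.powerset.image (fun u => t ∪ u)) x
      = σ.powerset.image (fun u => t.erase x ∪ u) := by
  unfold restrictX
  rw [Finset.image_image]
  refine Finset.image_congr ?_
  intro u hu
  rw [Finset.mem_coe, Finset.mem_powerset] at hu
  have hxu : x ∉ u := fun h => hx (hu h)
  simp only [Function.comp_apply]
  rw [Finset.erase_union_distrib, Finset.erase_eq_of_notMem hxu]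

lemma reduction_cubeS {σ t : Finset X} (ht : t ∩ σ = ∅) {y : X} (hy : y ∈ σ) :
    reduction (σ.powerset.image (fun u => t ∪ u)) y
      = (σ.erase y).powerset.image (fun u => t ∪ u) := by
  have hyt : y ∉ t := by
    intro h
    have : y ∈ t ∩ σ := Finset.mem_inter.2 ⟨h, hy⟩
    rw [ht] at this; exact absurd this (Finset.notMem_empty y)
  ext c
  simp only [reduction, Finset.mem_filter, Finset.mem_image, Finset.mem_powerset]
  constructor
  · rintro ⟨⟨u, hu, rfl⟩, hyc, -⟩
    refine ⟨u, ?_, rfl⟩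
    intro a ha
    exact Finset.mem_erase.2 ⟨fun e => hyc (e ▸ Finset.mem_union_right t ha), hu ha⟩
  · rintro ⟨u, hu, rfl⟩
    have huσ : u ⊆ σ := hu.trans (Finset.erase_subset _ _)
    have hyu : y ∉ u := fun h => Finset.notMem_erase y σ (hu h)
    refine ⟨⟨u, huσ, rfl⟩, ?_, ?_⟩
    · simp [hyt, hyu]
    · exact ⟨insert y u, Finset.insert_subset hy huσ, Finset.union_insert _ _ _⟩

lemma reduction_mono {Q C : Finset (Finset X)} (h : Q ⊆ C) (y : X) :
    reduction Q y ⊆ reduction C y := by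
  intro c hc
  rw [reduction, Finset.mem_filter] at hc ⊢
  exact ⟨h hc.1, hc.2.1, h hc.2.2⟩

/-- Restrictions and reductions of incomplete cubes are incomplete cubes,
and sources restrict/reduce to sources. -/
theorem stmt_13 (C D Q : Finset (Finset X)) (d : ℕ) (σ s : Finset X) (x y : X)
    (hC : IsMaximumClass C d) (hD : IsMaximumClass D (d - 1)) (hDC : D ⊆ C)
    (hQ : IsIncompleteCube C D Q σ) (hs : IsSource D Q σ s)
    (hx : x ∉ σ) (hy : y ∈ σ) :
    (IsIncompleteCube (restrictX C x) (restrictX D x) (restrictX Q x) σ ∧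
      IsSource (restrictX D x) (restrictX Q x) σ (s.erase x)) ∧
    (IsIncompleteCube (reduction C y) (reduction D y) (reduction Q y) (σ.erase y) ∧
      IsSource (reduction D y) (reduction Q y) (σ.erase y) (s.erase y)) := by
  obtain ⟨hQC, ⟨t, ht, hQeq⟩, hCσ, hDσ⟩ := hQ
  obtain ⟨hsQ, hsD⟩ := hs
  -- basic facts
  have hyt : y ∉ t := by
    intro h
    have : y ∈ t ∩ σ := Finset.mem_inter.2 ⟨h, hy⟩
    rw [ht] at this; exact absurd this (Finset.notMem_empty y)
  -- restriction cube
  have hQx : restrictX Q x = σ.powerset.image (fun u => t.erase x ∪ u) := by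
    rw [hQeq]; exact restrictX_cubeS hx
  have hQxcube : IsCubeS (restrictX Q x) σ := by
    refine ⟨t.erase x, ?_, hQx⟩
    have : t.erase x ∩ σ ⊆ t ∩ σ :=
      Finset.inter_subset_inter (Finset.erase_subset _ _) le_rfl
    rw [ht] at this
    exact Finset.subset_empty.1 this
  have hQxsub : restrictX Q x ⊆ restrictX C x := Finset.image_subset_image hQC
  -- reduction cube
  have hQy : reduction Q y = (σ.erase y).powerset.image (fun u => t ∪ u) := by
    rw [hQeq]; exact reduction_cubeS ht hy
  have hQycube : IsCubeS (reduction Q y) (σ.erase y) := by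
    refine ⟨t, ?_, hQy⟩
    have : t ∩ σ.erase y ⊆ t ∩ σ :=
      Finset.inter_subset_inter le_rfl (Finset.erase_subset _ _)
    rw [ht] at this
    exact Finset.subset_empty.1 this
  have hQysub : reduction Q y ⊆ reduction C y := reduction_mono hQC y
  refine ⟨⟨⟨hQxsub, hQxcube, shatters_mono hQxsub (isCubeS_shatters hQxcube), ?_⟩, ?_, ?_⟩,
    ⟨⟨hQysub, hQycube, shatters_mono hQysub (isCubeS_shatters hQycube), ?_⟩, ?_, ?_⟩⟩
  · -- ¬ Shatters (restrictX D x) σ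
    intro h
    apply hDσ
    intro u hu
    obtain ⟨c', hc', hceq⟩ := h u hu
    obtain ⟨c, hcD, rfl⟩ := Finset.mem_image.1 hc'
    rw [erase_inter_of_not_mem' hx] at hceq
    exact ⟨c, hcD, hceq⟩
  · -- s.erase x ∈ restrictX Q x
    exact Finset.mem_image_of_mem _ hsQ
  · -- source condition, restriction
    intro h
    obtain ⟨c', hc', hceq⟩ := Finset.mem_image.1 h
    obtain ⟨c, hcD, rfl⟩ := Finset.mem_image.1 hc'
    apply hsD
    rw [erase_inter_of_not_mem' hx, erase_inter_of_not_mem' hx] at hceq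
    exact Finset.mem_image.2 ⟨c, hcD, hceq⟩
  · -- ¬ Shatters (reduction D y) (σ.erase y)
    intro h
    apply hDσ
    intro u hu
    rw [Finset.mem_powerset] at hu
    obtain ⟨c, hc, hceq⟩ := h (u.erase y)
      (Finset.mem_powerset.2 (Finset.erase_subset_erase y hu))
    rw [reduction, Finset.mem_filter] at hc
    obtain ⟨hcD, hyc, hins⟩ := hc
    rw [inter_erase_of_not_mem' hyc] at hceq
    by_cases hyu : y ∈ u
    · refine ⟨insert y c, hins, ?_⟩
      rw [Finset.insert_inter_of_mem hy, hceq, Finset.insert_erase hyu]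
    · refine ⟨c, hcD, ?_⟩
      rw [hceq, Finset.erase_eq_of_notMem hyu]
  · -- s.erase y ∈ reduction Q y
    rw [hQy]
    rw [hQeq] at hsQ
    obtain ⟨u, hu, rfl⟩ := Finset.mem_image.1 hsQ
    rw [Finset.mem_powerset] at hu
    refine Finset.mem_image.2 ⟨u.erase y, Finset.mem_powerset.2 (Finset.erase_subset_erase y hu), ?_⟩
    rw [Finset.erase_union_distrib, Finset.erase_eq_of_notMem hyt]
  · -- source condition, reduction
    intro h
    obtain ⟨c, hc, hceq⟩ := Finset.mem_image.1 h
    rw [reduction, Finset.mem_filter] at hc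
    obtain ⟨hcD, hyc, hins⟩ := hc
    rw [inter_erase_of_not_mem' hyc, erase_inter_erase'] at hceq
    apply hsD
    by_cases hys : y ∈ s ∩ σ
    · refine Finset.mem_image.2 ⟨insert y c, hins, ?_⟩
      rw [Finset.insert_inter_of_mem hy, hceq, Finset.insert_erase hys]
    · refine Finset.mem_image.2 ⟨c, hcD, ?_⟩
      rw [hceq, Finset.erase_eq_of_notMem hys]
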